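/- For every integer k ≥ 1 and every set C of at least 2k − 1 colors, there exists a C-inextensible graph G with χ(G) = |C| − 2k + 3. Concretely, let m = |C| − 2k + 4, let H be the join of a stable set S of size 2k−1 with a complete graph K on m − 2 vertices; then χ(H) = m − 1 = |C| − 2k + 3, and the template precoloring the 2k−1 vertices of S with pairwise distinct colors (and empty forbidden lists on K) witnesses the C-inextensibility of H. -/

import Mathlib

open Finset

variable {V : Type*}

/-- A proper `C`-coloring of `G`: every vertex gets a color in `C` and adjacent
vertices get different colors. -/
def ProperColoring (G : SimpleGraph V) (C : Finset ℕ) (f : V → ℕ) : Prop :=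
  (∀ v, f v ∈ C) ∧ ∀ ⦃u v⦄, G.Adj u v → f u ≠ f v

/-- A proper `C`-coloring `f` of `G` respects the template `(S, c, F)` if it agrees
with `c` on `S` and avoids the forbidden list `F v` at each `v ∉ S`. -/
def Respects (G : SimpleGraph V) (C : Finset ℕ) (S : Finset V)
    (c : V → ℕ) (F : V → Finset ℕ) (f : V → ℕ) : Prop :=
  ProperColoring G C f ∧ (∀ v ∈ S, f v = c v) ∧ ∀ v ∉ S, f v ∉ F v

/-- `(S, c, F)` is a `C`-template on `G` (with `c` a proper `C`-coloring of `G[S]` and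
`F v ⊆ C` for `v ∉ S`) witnessing the `C`-inextensibility of `G`:
its `k`-cost `k|S| + Σ_{v∉S}|F(v)|` is less than `2k²`, `|F(v)| ≤ k` for all `v ∉ S`,
and no proper `C`-coloring of `G` respects it. -/
def Witnesses [Fintype V] [DecidableEq V] (k : ℕ) (G : SimpleGraph V) (C : Finset ℕ)
    (S : Finset V) (c : V → ℕ) (F : V → Finset ℕ) : Prop :=
  (∀ v ∈ S, c v ∈ C) ∧ (∀ u ∈ S, ∀ v ∈ S, G.Adj u v → c u ≠ c v) ∧
  (∀ v ∉ S, F v ⊆ C) ∧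
  k * S.card + ∑ v ∈ Sᶜ, (F v).card < 2 * k ^ 2 ∧
  (∀ v ∉ S, (F v).card ≤ k) ∧
  ¬ ∃ f : V → ℕ, Respects G C S c F f

/-- `G` is `C`-inextensible if some `C`-template witnesses its inextensibility. -/
def Inextensible [Fintype V] [DecidableEq V] (k : ℕ) (G : SimpleGraph V)
    (C : Finset ℕ) : Prop :=
  ∃ S c F, Witnesses k G C S c F

/-- `G` is minimally `C`-inextensible: it is `C`-inextensible but every proper induced
subgraph is `C`-extensible. -/
def MinInextensible [Fintype V] [DecidableEq V] (k : ℕ) (G : SimpleGraph V)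
    (C : Finset ℕ) : Prop :=
  Inextensible k G C ∧ ∀ A : Finset V, A ≠ Finset.univ →
    ¬ Inextensible k (SimpleGraph.induce (↑A : Set V) G) C

/-- For every `k ≥ 1` and every color set `C` with `|C| ≥ 2k − 1`, there exists a
`C`-inextensible graph `G` with `χ(G) = |C| − 2k + 3` (stated without truncated
subtraction as `χ(G) + 2k = |C| + 3`). -/
theorem inextensible_chromatic_optimal (k : ℕ) (hk : 1 ≤ k) (C : Finset ℕ)
    (hC : 2 * k - 1 ≤ C.card) :
    ∃ (n : ℕ) (G : SimpleGraph (Fin n)),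
      Inextensible k G C ∧
        G.chromaticNumber + ((2 * k : ℕ) : ℕ∞) = ((C.card : ℕ∞)) + 3 := by
  set s : ℕ := 2 * k - 1 with hs
  obtain ⟨r, hr⟩ : ∃ r, C.card = s + r := ⟨C.card - s, by omega⟩
  set n : ℕ := s + r + 1 with hn
  have hsn : s < n := by omega
  have hs1 : 1 ≤ s := by omega
  -- the graph: join of a stable set of size s with a clique on the rest
  set G : SimpleGraph (Fin n) :=
    { Adj := fun u v => u ≠ v ∧ (s ≤ u.val ∨ s ≤ v.val)
      symm := ⟨fun u v h => ⟨h.1.symm, h.2.symm⟩⟩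
      loopless := ⟨fun v h => h.1 rfl⟩ } with hG
  have hGadj : ∀ u v : Fin n, G.Adj u v ↔ u ≠ v ∧ (s ≤ u.val ∨ s ≤ v.val) := by
    intro u v; rfl
  set a : Fin n := ⟨s, hsn⟩ with ha
  set S : Finset (Fin n) := Finset.Iio a with hS
  have hmemS : ∀ v : Fin n, v ∈ S ↔ v.val < s := by
    intro v; rw [hS, Finset.mem_Iio, Fin.lt_def]
  have hcardS : S.card = s := by
    simp [hS, Fin.card_Iio]; rfl
  set c : Fin n → ℕ := fun v =>
    if h : v.val < C.card then C.orderEmbOfFin rfl ⟨v.val, h⟩ else 0 with hc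
  have hcC : ∀ v : Fin n, v.val < s → c v ∈ C := by
    intro v hv
    have h : v.val < C.card := by omega
    simp only [hc, dif_pos h]
    exact C.orderEmbOfFin_mem rfl _
  have hcinj : ∀ u v : Fin n, u.val < s → v.val < s → c u = c v → u = v := by
    intro u v hu hv hcc
    have hu' : u.val < C.card := by omega
    have hv' : v.val < C.card := by omega
    simp only [hc, dif_pos hu', dif_pos hv'] at hcc
    have h2 := (C.orderEmbOfFin rfl).injective hcc
    injection h2 with h3
    exact Fin.ext h3
  refine ⟨n, G, ⟨S, c, fun _ => ∅, ?_, ?_, ?_, ?_, ?_, ?_⟩, ?_⟩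
  · intro v hv; exact hcC v ((hmemS v).1 hv)
  · intro u hu v hv hadj
    rw [hmemS] at hu hv
    rcases (hGadj u v).1 hadj with ⟨-, h⟩
    omega
  · intro v _; exact Finset.empty_subset C
  · simp only [Finset.card_empty, Finset.sum_const_zero, hcardS]
    have h2 : s + 1 = 2 * k := by omega
    have hks : k * s + k = 2 * k ^ 2 := by
      calc k * s + k = k * (s + 1) := by ring
        _ = k * (2 * k) := by rw [h2]
        _ = 2 * k ^ 2 := by ring
    linarith
  · intro v _; simp
  · rintro ⟨f, ⟨hfC, hfadj⟩, hfS, -⟩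
    -- the clique part Sᶜ needs C.card - s + 1 colors but only C.card - s remain
    have hinjT : Set.InjOn f (Sᶜ : Finset (Fin n)) := by
      intro u hu v hv hfe
      by_contra hne
      simp only [Finset.coe_compl, Set.mem_compl_iff, Finset.mem_coe, hmemS] at hu hv
      exact hfadj ((hGadj u v).2 ⟨hne, Or.inl (by omega)⟩) hfe
    have hsub : (Sᶜ : Finset (Fin n)).image f ⊆ C \ S.image c := by
      intro x hx
      rw [Finset.mem_image] at hx
      obtain ⟨t, ht, rfl⟩ := hx
      rw [Finset.mem_compl, hmemS] at ht
      rw [Finset.mem_sdiff]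
      refine ⟨hfC t, ?_⟩
      rw [Finset.mem_image]
      rintro ⟨u, hu, hcu⟩
      have hu' := (hmemS u).1 hu
      have hadj : G.Adj t u := (hGadj t u).2 ⟨by
        intro h; rw [h] at ht; omega, Or.inl (by omega)⟩
      exact hfadj hadj (by rw [← hcu, hfS u hu])
    have hcardT : (Sᶜ : Finset (Fin n)).card = r + 1 := by
      rw [Finset.card_compl, hcardS]
      simp; omega
    have hcardimg : ((Sᶜ : Finset (Fin n)).image f).card = r + 1 := by
      rw [Finset.card_image_of_injOn hinjT, hcardT]
    have hSimg : (S.image c).card = s := by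
      rw [Finset.card_image_of_injOn, hcardS]
      intro u hu v hv
      exact hcinj u v ((hmemS u).1 hu) ((hmemS v).1 hv)
    have hSsub : S.image c ⊆ C := by
      intro x hx
      rw [Finset.mem_image] at hx
      obtain ⟨u, hu, rfl⟩ := hx
      exact hcC u ((hmemS u).1 hu)
    have := Finset.card_le_card hsub
    rw [hcardimg, Finset.card_sdiff_of_subset hSsub, hSimg] at this
    omega
  · -- chromatic number computation
    have hchrom : G.chromaticNumber = ((r + 2 : ℕ) : ℕ∞) := by
      apply le_antisymm
      · -- colorable with r + 2 colors
        rw [SimpleGraph.chromaticNumber_le_iff_colorable]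
        refine ⟨SimpleGraph.Coloring.mk
          (fun v => if h : v.val < s then (⟨0, by omega⟩ : Fin (r + 2))
            else ⟨v.val - s + 1, by omega⟩) ?_⟩
        intro u v hadj
        rcases (hGadj u v).1 hadj with ⟨hne, hge⟩
        have hne' : u.val ≠ v.val := fun h => hne (Fin.ext h)
        by_cases hu : u.val < s <;> by_cases hv : v.val < s
        · omega
        · simp only [dif_pos hu, dif_neg hv]
          intro h
          have h2 : (0 : ℕ) = v.val - s + 1 := congrArg Fin.val h
          omega
        · simp only [dif_neg hu, dif_pos hv]
          intro h
          have h2 : u.val - s + 1 = 0 := congrArg Fin.val h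
          omega
        · simp only [dif_neg hu, dif_neg hv]
          intro h
          have h2 : u.val - s + 1 = v.val - s + 1 := congrArg Fin.val h
          omega
      · -- lower bound via a clique of size r + 2
        set b : Fin n := ⟨s - 1, by omega⟩ with hb
        have hclique : G.IsClique (Finset.Ici b : Finset (Fin n)) := by
          intro u hu v hv hne
          simp only [Finset.coe_Ici, Set.mem_Ici] at hu hv
          have hu' : s - 1 ≤ u.val := hu
          have hv' : s - 1 ≤ v.val := hv
          have hne' : u.val ≠ v.val := fun h => hne (Fin.ext h)
          exact (hGadj u v).2 ⟨hne, by omega⟩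
        have hcard : (Finset.Ici b : Finset (Fin n)).card = r + 2 := by
          rw [Fin.card_Ici]
          show n - (s - 1) = r + 2
          omega
        have := hclique.card_le_chromaticNumber
        rw [hcard] at this
        exact this
    rw [hchrom]
    have : (r + 2) + 2 * k = C.card + 3 := by omega
    rw [← Nat.cast_add, this]
    push_cast
    ring
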